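/- Let n ≥ 1 and let 0 ≤ i ≤ j ≤ n with i + 2j > 2n (equivalently i/2 + j > n). Then there exists a nonzero function f : Σ_3^n → ℝ in U_{[i,j]}(n,3) whose support has cardinality exactly 2^{i+j−n} · 3^{n−j}. -/

import Mathlib

/-- `f` belongs to the eigenspace `U_k(n,q)` of the Hamming graph `H(n,q)`,
i.e. `λ_k(n,q) · f(x) = Σ_{y ∈ N(x)} f(y)` for every vertex `x`, where
`λ_k(n,q) = n(q-1) - q·k` and `N(x)` is the set of vertices at Hamming distance 1 from `x`. -/
def inU (n q k : ℕ) (f : (Fin n → Fin q) → ℝ) : Prop :=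
  ∀ x : Fin n → Fin q,
    ((n : ℝ) * ((q : ℝ) - 1) - (q : ℝ) * (k : ℝ)) * f x =
      ∑ y ∈ Finset.univ.filter (fun y : Fin n → Fin q => hammingDist x y = 1), f y

/-- `f` belongs to the direct sum `U_{[i,j]}(n,q) = U_i(n,q) ⊕ … ⊕ U_j(n,q)`,
i.e. `f = Σ_{k=i}^{j} g_k` with `g_k ∈ U_k(n,q)`. -/
def inUIJ (n q i j : ℕ) (f : (Fin n → Fin q) → ℝ) : Prop :=
  ∃ g : ℕ → (Fin n → Fin q) → ℝ,
    (∀ k ∈ Finset.Icc i j, inU n q k (g k)) ∧ f = ∑ k ∈ Finset.Icc i j, g k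

/-- The cardinality of the support of `f`. -/
noncomputable def suppCard (n q : ℕ) (f : (Fin n → Fin q) → ℝ) : ℕ :=
  (Finset.univ.filter (fun x : Fin n → Fin q => f x ≠ 0)).card

section Helpers

/-- The distance-1 sphere around `x`, summed, equals the sum over single-coordinate updates. -/
lemma sum_nbrs {n q : ℕ} (f : (Fin n → Fin q) → ℝ) (x : Fin n → Fin q) :
    ∑ y ∈ Finset.univ.filter (fun y : Fin n → Fin q => hammingDist x y = 1), f y =
    ∑ t : Fin n, ∑ v ∈ Finset.univ.filter (fun v : Fin q => v ≠ x t),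
      f (Function.update x t v) := by
  rw [Finset.sum_sigma']
  refine (Finset.sum_nbij (fun p => Function.update x p.1 p.2) ?_ ?_ ?_ ?_).symm
  · rintro ⟨t, v⟩ hp
    simp only [Finset.mem_sigma, Finset.mem_univ, Finset.mem_filter, true_and] at hp
    simp only [Finset.mem_filter, Finset.mem_univ, true_and]
    show (Finset.univ.filter fun i => x i ≠ Function.update x t v i).card = 1
    have hset : (Finset.univ.filter fun i => x i ≠ Function.update x t v i) = {t} := by
      ext i
      simp only [Finset.mem_filter, Finset.mem_univ, true_and, Finset.mem_singleton]
      constructor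
      · intro hi
        by_contra hit
        rw [Function.update_of_ne hit] at hi
        exact hi rfl
      · rintro rfl
        rw [Function.update_self]
        exact Ne.symm hp
    rw [hset, Finset.card_singleton]
  · intro p hp p' hp' heq
    obtain ⟨t, v⟩ := p
    obtain ⟨t', v'⟩ := p'
    simp only [Finset.coe_sigma, Set.mem_sigma_iff, Finset.mem_coe, Finset.mem_univ,
      Finset.mem_filter, true_and] at hp hp'
    rcases eq_or_ne t t' with rfl | htt
    · have h1 := congrFun heq t
      simp only [Function.update_self] at h1
      subst h1; rfl
    · exfalso
      have h1 := congrFun heq t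
      simp only [Function.update_self, Function.update_of_ne htt] at h1
      exact hp h1
  · intro y hy
    simp only [Finset.coe_filter, Finset.mem_univ, true_and, Set.mem_setOf_eq] at hy
    have hy' : (Finset.univ.filter fun i => x i ≠ y i).card = 1 := hy
    obtain ⟨t, ht⟩ := Finset.card_eq_one.mp hy'
    have hxt : x t ≠ y t := by
      have : t ∈ (Finset.univ.filter fun i => x i ≠ y i) := by
        rw [ht]; exact Finset.mem_singleton_self t
      simpa using this
    refine ⟨⟨t, y t⟩, ?_, ?_⟩
    · simp only [Finset.coe_sigma, Set.mem_sigma_iff, Finset.mem_coe, Finset.mem_univ,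
        Finset.mem_filter, true_and]
      exact Ne.symm hxt
    · show Function.update x t (y t) = y
      funext i
      rcases eq_or_ne i t with rfl | hit
      · rw [Function.update_self]
      · rw [Function.update_of_ne hit]
        by_contra hne
        have : i ∈ (Finset.univ.filter fun i => x i ≠ y i) := by simpa using hne
        rw [ht, Finset.mem_singleton] at this
        exact hit this
  · intro p hp
    rfl

lemma inU_zero {n k : ℕ} : inU n 3 k 0 := by
  intro x; simp

lemma inU_smul {n k : ℕ} (c : ℝ) {f : (Fin n → Fin 3) → ℝ} (h : inU n 3 k f) :
    inU n 3 k (fun x => c * f x) := by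
  intro x
  have hx := h x
  calc ((n : ℝ) * (((3:ℕ):ℝ) - 1) - ((3:ℕ):ℝ) * (k : ℝ)) * (c * f x)
      = c * (((n : ℝ) * (((3:ℕ):ℝ) - 1) - ((3:ℕ):ℝ) * (k : ℝ)) * f x) := by ring
    _ = c * ∑ y ∈ Finset.univ.filter (fun y => hammingDist x y = 1), f y := by rw [hx]
    _ = ∑ y ∈ Finset.univ.filter (fun y => hammingDist x y = 1), c * f y := by
        rw [Finset.mul_sum]

lemma inU_sum {n k : ℕ} {ι : Type*} {s : Finset ι} {F : ι → (Fin n → Fin 3) → ℝ}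
    (h : ∀ a ∈ s, inU n 3 k (F a)) : inU n 3 k (∑ a ∈ s, F a) := by
  intro x
  calc ((n : ℝ) * (((3:ℕ):ℝ) - 1) - ((3:ℕ):ℝ) * (k : ℝ)) * (∑ a ∈ s, F a) x
      = ∑ a ∈ s, ((n : ℝ) * (((3:ℕ):ℝ) - 1) - ((3:ℕ):ℝ) * (k : ℝ)) * F a x := by
        rw [Finset.sum_apply, Finset.mul_sum]
    _ = ∑ a ∈ s, ∑ y ∈ Finset.univ.filter (fun y => hammingDist x y = 1), F a y :=
        Finset.sum_congr rfl (fun a ha => h a ha x)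
    _ = ∑ y ∈ Finset.univ.filter (fun y => hammingDist x y = 1), ∑ a ∈ s, F a y :=
        Finset.sum_comm
    _ = ∑ y ∈ Finset.univ.filter (fun y => hammingDist x y = 1), (∑ a ∈ s, F a) y := by
        simp [Finset.sum_apply]

/-- One-coordinate blocks with integer values. -/
lemma inU_dim1 (k : ℕ) (φ : Fin 3 → ℤ)
    (hφ : ∀ a : Fin 3, (2 - 3 * (k : ℤ)) * φ a =
      ∑ v ∈ Finset.univ.filter (fun v : Fin 3 => v ≠ a), φ v) :
    inU 1 3 k (fun x => (φ (x 0) : ℝ)) := by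
  intro x
  rw [sum_nbrs, Fin.sum_univ_one]
  simp only [Function.update_self]
  have h2 : (2 - 3 * (k : ℝ)) * (φ (x 0) : ℝ)
      = ∑ v ∈ Finset.univ.filter (fun v : Fin 3 => v ≠ x 0), (φ v : ℝ) := by
    exact_mod_cast hφ (x 0)
  have h3 : ((1:ℕ) : ℝ) * (((3:ℕ):ℝ) - 1) - ((3:ℕ):ℝ) * (k : ℝ) = 2 - 3 * (k:ℝ) := by
    push_cast; ring
  rw [h3, h2]

/-- Three-coordinate blocks with integer values. -/
lemma inU_dim3 (k : ℕ) (ψ : Fin 3 → Fin 3 → Fin 3 → ℤ)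
    (hψ : ∀ a b c : Fin 3,
      (6 - 3 * (k : ℤ)) * ψ a b c =
        (∑ v ∈ Finset.univ.filter (fun v : Fin 3 => v ≠ a), ψ v b c) +
        (∑ v ∈ Finset.univ.filter (fun v : Fin 3 => v ≠ b), ψ a v c) +
        (∑ v ∈ Finset.univ.filter (fun v : Fin 3 => v ≠ c), ψ a b v)) :
    inU 3 3 k (fun x => (ψ (x 0) (x 1) (x 2) : ℝ)) := by
  intro x
  rw [sum_nbrs, Fin.sum_univ_three]
  simp only [Function.update_self,
    Function.update_of_ne (show (1:Fin 3) ≠ 0 by decide),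
    Function.update_of_ne (show (2:Fin 3) ≠ 0 by decide),
    Function.update_of_ne (show (0:Fin 3) ≠ 1 by decide),
    Function.update_of_ne (show (2:Fin 3) ≠ 1 by decide),
    Function.update_of_ne (show (0:Fin 3) ≠ 2 by decide),
    Function.update_of_ne (show (1:Fin 3) ≠ 2 by decide)]
  have h2 : (6 - 3 * (k : ℝ)) * (ψ (x 0) (x 1) (x 2) : ℝ)
      = (∑ v ∈ Finset.univ.filter (fun v : Fin 3 => v ≠ x 0), (ψ v (x 1) (x 2) : ℝ)) +
        (∑ v ∈ Finset.univ.filter (fun v : Fin 3 => v ≠ x 1), (ψ (x 0) v (x 2) : ℝ)) +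
        (∑ v ∈ Finset.univ.filter (fun v : Fin 3 => v ≠ x 2), (ψ (x 0) (x 1) v : ℝ)) := by
    exact_mod_cast hψ (x 0) (x 1) (x 2)
  have h3 : ((3:ℕ) : ℝ) * (((3:ℕ):ℝ) - 1) - ((3:ℕ):ℝ) * (k : ℝ) = 6 - 3 * (k:ℝ) := by
    push_cast; ring
  rw [h3, h2]

/-- Tensor product of eigenfunctions. -/
lemma inU_tensor {m k a b : ℕ} {g : (Fin m → Fin 3) → ℝ} {h : (Fin k → Fin 3) → ℝ}
    (hg : inU m 3 a g) (hh : inU k 3 b h) :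
    inU (m + k) 3 (a + b)
      (fun x => g (fun t => x (Fin.castAdd k t)) * h (fun s => x (Fin.natAdd m s))) := by
  intro x
  rw [sum_nbrs, Fin.sum_univ_add]
  have e1 : ∀ (t : Fin m) (v : Fin 3),
      (fun s => Function.update x (Fin.castAdd k t) v (Fin.castAdd k s))
        = Function.update (fun s => x (Fin.castAdd k s)) t v := by
    intro t v
    funext s
    rcases eq_or_ne s t with rfl | hst
    · rw [Function.update_self, Function.update_self]
    · rw [Function.update_of_ne hst,
        Function.update_of_ne (fun hc => hst (by simpa [Fin.ext_iff] using hc))]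
  have e2 : ∀ (t : Fin m) (v : Fin 3),
      (fun s => Function.update x (Fin.castAdd k t) v (Fin.natAdd m s))
        = fun s => x (Fin.natAdd m s) := by
    intro t v
    funext s
    refine Function.update_of_ne (fun hc => ?_) _ _
    have hv := congrArg Fin.val hc
    simp only [Fin.coe_natAdd, Fin.coe_castAdd] at hv
    have ht := t.isLt
    omega
  have e3 : ∀ (t : Fin k) (v : Fin 3),
      (fun s => Function.update x (Fin.natAdd m t) v (Fin.natAdd m s))
        = Function.update (fun s => x (Fin.natAdd m s)) t v := by
    intro t v
    funext s
    rcases eq_or_ne s t with rfl | hst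
    · rw [Function.update_self, Function.update_self]
    · rw [Function.update_of_ne hst,
        Function.update_of_ne (fun hc => hst (by simpa [Fin.ext_iff] using hc))]
  have e4 : ∀ (t : Fin k) (v : Fin 3),
      (fun s => Function.update x (Fin.natAdd m t) v (Fin.castAdd k s))
        = fun s => x (Fin.castAdd k s) := by
    intro t v
    funext s
    refine Function.update_of_ne (fun hc => ?_) _ _
    have hv := congrArg Fin.val hc
    simp only [Fin.coe_natAdd, Fin.coe_castAdd] at hv
    have ht := t.isLt
    omega
  simp only [e1, e2, e3, e4]
  simp only [← Finset.sum_mul, ← Finset.mul_sum]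
  rw [← sum_nbrs g (fun s => x (Fin.castAdd k s)), ← sum_nbrs h (fun s => x (Fin.natAdd m s)),
    ← hg (fun s => x (Fin.castAdd k s)), ← hh (fun s => x (Fin.natAdd m s))]
  push_cast
  ring

/-- Tensor product of interval functions. -/
lemma inUIJ_tensor {m k i j i' j' : ℕ} {g : (Fin m → Fin 3) → ℝ} {h : (Fin k → Fin 3) → ℝ}
    (hg : inUIJ m 3 i j g) (hh : inUIJ k 3 i' j' h) :
    inUIJ (m + k) 3 (i + i') (j + j')
      (fun x => g (fun t => x (Fin.castAdd k t)) * h (fun s => x (Fin.natAdd m s))) := by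
  obtain ⟨G, hG, hgeq⟩ := hg
  obtain ⟨H, hH, hheq⟩ := hh
  refine ⟨fun M => ∑ p ∈ Finset.Icc i j ×ˢ Finset.Icc i' j',
      if p.1 + p.2 = M then
        (fun x => G p.1 (fun t => x (Fin.castAdd k t)) * H p.2 (fun s => x (Fin.natAdd m s)))
      else 0, ?_, ?_⟩
  · intro M hM
    apply inU_sum
    rintro ⟨p1, p2⟩ hp
    simp only [Finset.mem_product, Finset.mem_Icc] at hp
    by_cases hpm : p1 + p2 = M
    · simp only [if_pos hpm]
      rw [← hpm]
      exact inU_tensor (hG p1 (Finset.mem_Icc.mpr hp.1)) (hH p2 (Finset.mem_Icc.mpr hp.2))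
    · simp only [if_neg hpm]
      exact inU_zero
  · subst hgeq; subst hheq
    funext x
    simp only [Finset.sum_apply]
    rw [Finset.sum_mul_sum]
    symm
    calc ∑ M ∈ Finset.Icc (i+i') (j+j'), ∑ p ∈ Finset.Icc i j ×ˢ Finset.Icc i' j',
          (if p.1 + p.2 = M then
            (fun x => G p.1 (fun t => x (Fin.castAdd k t)) * H p.2 (fun s => x (Fin.natAdd m s)))
          else (0 : (Fin (m + k) → Fin 3) → ℝ)) x
        = ∑ M ∈ Finset.Icc (i+i') (j+j'), ∑ p ∈ Finset.Icc i j ×ˢ Finset.Icc i' j',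
            (if p.1 + p.2 = M then
              G p.1 (fun t => x (Fin.castAdd k t)) * H p.2 (fun s => x (Fin.natAdd m s))
            else 0) := by
          apply Finset.sum_congr rfl; intro M _
          apply Finset.sum_congr rfl; intro p _
          split_ifs <;> rfl
      _ = ∑ p ∈ Finset.Icc i j ×ˢ Finset.Icc i' j', ∑ M ∈ Finset.Icc (i+i') (j+j'),
            (if p.1 + p.2 = M then
              G p.1 (fun t => x (Fin.castAdd k t)) * H p.2 (fun s => x (Fin.natAdd m s))
            else 0) := Finset.sum_comm
      _ = ∑ p ∈ Finset.Icc i j ×ˢ Finset.Icc i' j',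
            G p.1 (fun t => x (Fin.castAdd k t)) * H p.2 (fun s => x (Fin.natAdd m s)) := by
          apply Finset.sum_congr rfl
          rintro ⟨p1, p2⟩ hp
          simp only [Finset.mem_product, Finset.mem_Icc] at hp
          rw [Finset.sum_ite_eq]
          rw [if_pos (Finset.mem_Icc.mpr (by omega))]
      _ = ∑ p1 ∈ Finset.Icc i j, ∑ p2 ∈ Finset.Icc i' j',
            G p1 (fun t => x (Fin.castAdd k t)) * H p2 (fun s => x (Fin.natAdd m s)) :=
          Finset.sum_product' _ _
            (fun p1 p2 => G p1 (fun t => x (Fin.castAdd k t)) * H p2 (fun s => x (Fin.natAdd m s)))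

/-- Support of a tensor product. -/
lemma suppCard_tensor {m k : ℕ} (g : (Fin m → Fin 3) → ℝ) (h : (Fin k → Fin 3) → ℝ) :
    suppCard (m + k) 3
      (fun x => g (fun t => x (Fin.castAdd k t)) * h (fun s => x (Fin.natAdd m s)))
      = suppCard m 3 g * suppCard k 3 h := by
  unfold suppCard
  rw [← Finset.card_product]
  apply Finset.card_nbij'
    (i := fun y => ((fun t => y (Fin.castAdd k t)), (fun s => y (Fin.natAdd m s))))
    (j := fun p => Fin.append p.1 p.2)
  · intro y hy
    simp only [Finset.mem_coe, Finset.mem_filter, Finset.mem_univ, true_and] at hy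
    simp only [Finset.mem_coe, Finset.mem_product, Finset.mem_filter, Finset.mem_univ, true_and]
    exact mul_ne_zero_iff.mp hy
  · rintro ⟨p1, p2⟩ hp
    simp only [Finset.mem_coe, Finset.mem_product, Finset.mem_filter, Finset.mem_univ, true_and] at hp
    simp only [Finset.mem_coe, Finset.mem_filter, Finset.mem_univ, true_and]
    have h1 : (fun t => Fin.append p1 p2 (Fin.castAdd k t)) = p1 := by
      funext t; exact Fin.append_left p1 p2 t
    have h2 : (fun s => Fin.append p1 p2 (Fin.natAdd m s)) = p2 := by
      funext s; exact Fin.append_right p1 p2 s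
    rw [h1, h2]
    exact mul_ne_zero hp.1 hp.2
  · intro y _
    funext t
    refine Fin.addCases (fun l => ?_) (fun r => ?_) t
    · dsimp only; rw [Fin.append_left]
    · dsimp only; rw [Fin.append_right]
  · rintro ⟨p1, p2⟩ _
    simp only [Prod.mk.injEq]
    constructor
    · funext t; exact Fin.append_left p1 p2 t
    · funext s; exact Fin.append_right p1 p2 s

/-- The existence predicate we build by induction. -/
def Good (n i j c : ℕ) : Prop :=
  ∃ f : (Fin n → Fin 3) → ℝ, inUIJ n 3 i j f ∧ suppCard n 3 f = c

lemma Good.tensor {m k i j i' j' c c' : ℕ} (h1 : Good m i j c) (h2 : Good k i' j' c') :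
    Good (m + k) (i + i') (j + j') (c * c') := by
  obtain ⟨g, hg, hgc⟩ := h1
  obtain ⟨h, hh, hhc⟩ := h2
  exact ⟨_, inUIJ_tensor hg hh, by rw [suppCard_tensor, hgc, hhc]⟩

lemma Good.cast {n i j c n' i' j' c' : ℕ} (h : Good n i j c)
    (hn : n = n') (hi : i = i') (hj : j = j') (hc : c = c') : Good n' i' j' c' := by
  rw [← hn, ← hi, ← hj, ← hc]; exact h

/-! ### Base blocks -/

def uZ : Fin 3 → ℤ := fun a => if a = 0 then 1 else if a = 1 then -1 else 0
def oZ : Fin 3 → ℤ := fun _ => 1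
def eZ : Fin 3 → ℤ := fun a => if a = 0 then 2 else -1
def yZ : Fin 3 → Fin 3 → Fin 3 → ℤ := fun a b c =>
  if a = 0 then (if b = 0 ∧ c = 0 then -1 else if b = 1 ∧ c = 1 then 1 else 0)
  else if a = 1 then (if b = 0 ∧ c = 2 then 1 else if b = 2 ∧ c = 1 then -1 else 0)
  else (if b = 1 ∧ c = 2 then -1 else if b = 2 ∧ c = 0 then 1 else 0)

lemma uGood : Good 1 1 1 2 := by
  refine ⟨fun x => (uZ (x 0) : ℝ), ⟨fun _ => fun x => (uZ (x 0) : ℝ), ?_, ?_⟩, ?_⟩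
  · intro K hK
    have hK1 : K = 1 := by simp only [Finset.mem_Icc] at hK; omega
    subst hK1
    exact inU_dim1 1 uZ (by decide)
  · rw [Finset.Icc_self, Finset.sum_singleton]
  · unfold suppCard
    rw [Finset.filter_congr
      (fun (x : Fin 1 → Fin 3) (_ : x ∈ Finset.univ) =>
        (Int.cast_ne_zero : ((uZ (x 0) : ℤ) : ℝ) ≠ 0 ↔ uZ (x 0) ≠ 0))]
    decide

lemma dGood : Good 1 0 1 1 := by
  refine ⟨fun x => if x 0 = 0 then (1:ℝ) else 0,
    ⟨fun K => if K = 0 then (fun x => (1/3 : ℝ) * ((oZ (x 0) : ℤ) : ℝ))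
      else (fun x => (1/3 : ℝ) * ((eZ (x 0) : ℤ) : ℝ)), ?_, ?_⟩, ?_⟩
  · intro K hK
    simp only [Finset.mem_Icc] at hK
    have hK01 : K = 0 ∨ K = 1 := by omega
    rcases hK01 with rfl | rfl
    · simp only [if_pos rfl]
      exact inU_smul _ (inU_dim1 0 oZ (by decide))
    · simp only [if_neg one_ne_zero]
      exact inU_smul _ (inU_dim1 1 eZ (by decide))
  · have hicc : Finset.Icc (0:ℕ) 1 = {0, 1} := by decide
    rw [hicc, Finset.sum_insert (by decide), Finset.sum_singleton]
    funext x
    simp only [Pi.add_apply, if_pos rfl, if_neg one_ne_zero]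
    have : ∀ a : Fin 3, (if a = 0 then (1:ℝ) else 0)
        = (1/3 : ℝ) * ((oZ a : ℤ) : ℝ) + (1/3 : ℝ) * ((eZ a : ℤ) : ℝ) := by
      intro a
      fin_cases a <;> simp (config := { decide := true }) [oZ, eZ] <;> norm_num
    exact this (x 0)
  · unfold suppCard
    rw [Finset.filter_congr
      (fun (x : Fin 1 → Fin 3) (_ : x ∈ Finset.univ) =>
        (by rcases eq_or_ne (x 0) 0 with h | h <;> simp [h] :
          ((if x 0 = 0 then (1:ℝ) else 0) ≠ 0 ↔ x 0 = 0)))]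
    decide

lemma yGood : Good 3 2 2 6 := by
  refine ⟨fun x => (yZ (x 0) (x 1) (x 2) : ℝ),
    ⟨fun _ => fun x => (yZ (x 0) (x 1) (x 2) : ℝ), ?_, ?_⟩, ?_⟩
  · intro K hK
    have hK2 : K = 2 := by simp only [Finset.mem_Icc] at hK; omega
    subst hK2
    exact inU_dim3 2 yZ (by decide)
  · rw [Finset.Icc_self, Finset.sum_singleton]
  · unfold suppCard
    rw [Finset.filter_congr
      (fun (x : Fin 3 → Fin 3) (_ : x ∈ Finset.univ) =>
        (Int.cast_ne_zero : ((yZ (x 0) (x 1) (x 2) : ℤ) : ℝ) ≠ 0 ↔ yZ (x 0) (x 1) (x 2) ≠ 0))]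
    decide

/-! ### Assembly -/

lemma buildA (a : ℕ) : Good (1 + a) (1 + a) (1 + a) (2 ^ (1 + a)) := by
  induction a with
  | zero => exact uGood.cast (by omega) (by omega) (by omega) (by norm_num)
  | succ a ih =>
      exact (ih.tensor uGood).cast (by omega) (by omega) (by omega) (by ring)

lemma buildAD (a d : ℕ) : Good (1 + a + d) (1 + a) (1 + a + d) (2 ^ (1 + a)) := by
  induction d with
  | zero => exact (buildA a).cast (by omega) (by omega) (by omega) rfl
  | succ d ih =>
      exact (ih.tensor dGood).cast (by omega) (by omega) (by omega) (by ring)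

lemma buildADY (a d y : ℕ) :
    Good (1 + a + d + 3 * y) (1 + a + 2 * y) (1 + a + d + 2 * y) (2 ^ (1 + a + y) * 3 ^ y) := by
  induction y with
  | zero => exact (buildAD a d).cast (by omega) (by omega) (by omega) (by ring)
  | succ y ih =>
      exact (ih.tensor yGood).cast (by omega) (by omega) (by omega) (by ring)

end Helpers

/-- If `0 ≤ i ≤ j ≤ n` and `i + 2j > 2n`, then there is a nonzero function in
`U_{[i,j]}(n,3)` whose support has cardinality exactly `2^{i+j-n} · 3^{n-j}`. -/
theorem stmt8 (n i j : ℕ) (hn : 1 ≤ n) (hij : i ≤ j) (hjn : j ≤ n) (hsum : 2 * n < i + 2 * j) :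
    ∃ f : (Fin n → Fin 3) → ℝ, inUIJ n 3 i j f ∧ f ≠ 0 ∧
      suppCard n 3 f = 2 ^ (i + j - n) * 3 ^ (n - j) := by
  have key := buildADY (i + 2 * j - 2 * n - 1) (j - i) (n - j)
  have e1 : 1 + (i + 2 * j - 2 * n - 1) + (j - i) + 3 * (n - j) = n := by omega
  have e2 : 1 + (i + 2 * j - 2 * n - 1) + 2 * (n - j) = i := by omega
  have e3 : 1 + (i + 2 * j - 2 * n - 1) + (j - i) + 2 * (n - j) = j := by omega
  have e4 : 1 + (i + 2 * j - 2 * n - 1) + (n - j) = i + j - n := by omega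
  rw [e1, e2, e3, e4] at key
  obtain ⟨f, hf, hc⟩ := key
  refine ⟨f, hf, ?_, hc⟩
  intro h0
  rw [h0] at hc
  have hz : suppCard n 3 0 = 0 := by
    unfold suppCard; simp
  rw [hz] at hc
  have hpos : 0 < 2 ^ (i + j - n) * 3 ^ (n - j) := by positivity
  omega
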